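/- Let Π* ∈ R^{N×K} have nonnegative entries with every row summing to 1, and suppose there are row indices S = (S₁, …, S_K) with Π*_{S,:} = I_K (a pure subject for every profile). Let Θ* ∈ R^{J×K} have rank K, set R* := Π*·(Θ*)ᵀ, and let R* = U*·Λ*·(V*)ᵀ be a compact singular value decomposition, i.e., U* ∈ R^{N×K} and V* ∈ R^{J×K} have orthonormal columns and Λ* ∈ R^{K×K} is diagonal with strictly positive diagonal entries. Then the K×K matrix U*_{S,:} is invertible, and moreover U* = Π*·U*_{S,:}, Π* = U*·(U*_{S,:})⁻¹, and Θ* = V*·Λ*·(U*_{S,:})ᵀ. -/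

import Mathlib

open scoped BigOperators
open Matrix

lemma submatrix_mul_id' {N K L M : ℕ} (A : Matrix (Fin N) (Fin L) ℝ)
    (B : Matrix (Fin L) (Fin M) ℝ) (S : Fin K → Fin N) :
    (A * B).submatrix S id = A.submatrix S id * B := by
  ext i j
  simp [Matrix.mul_apply, Matrix.submatrix_apply]

/-- Lemma: simplex geometry of the left singular vectors.
With a pure subject for every profile (rows `S` of `Π*` forming `I_K`) and a rank-`K`
item-parameter matrix, the compact SVD `R* = U*·Λ*·(V*)ᵀ` of `R* = Π*·(Θ*)ᵀ` satisfies: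
`U*_{S,:}` is invertible, `U* = Π*·U*_{S,:}`, `Π* = U*·(U*_{S,:})⁻¹`, and
`Θ* = V*·Λ*·(U*_{S,:})ᵀ`. -/
theorem stmt1 (N J K : ℕ) (hK : 0 < K) (hKN : K ≤ N) (hKJ : K ≤ J)
    (Pm : Matrix (Fin N) (Fin K) ℝ) (Tm : Matrix (Fin J) (Fin K) ℝ)
    (hPmpos : ∀ i k, 0 ≤ Pm i k) (hPmsum : ∀ i, ∑ k, Pm i k = 1)
    (S : Fin K → Fin N) (hS : Pm.submatrix S id = 1)
    (hTm : Tm.rank = K)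
    (Ustar : Matrix (Fin N) (Fin K) ℝ) (Vstar : Matrix (Fin J) (Fin K) ℝ)
    (σs : Fin K → ℝ)
    (hUorth : Ustarᵀ * Ustar = 1) (hVorth : Vstarᵀ * Vstar = 1)
    (hσpos : ∀ k, 0 < σs k)
    (hSVD : Pm * Tmᵀ = Ustar * Matrix.diagonal σs * Vstarᵀ) :
    IsUnit (Ustar.submatrix S id) ∧
    Ustar = Pm * Ustar.submatrix S id ∧
    Pm = Ustar * (Ustar.submatrix S id)⁻¹ ∧
    Tm = Vstar * Matrix.diagonal σs * (Ustar.submatrix S id)ᵀ := by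
  set Λ : Matrix (Fin K) (Fin K) ℝ := Matrix.diagonal σs with hΛ
  set Λi : Matrix (Fin K) (Fin K) ℝ := Matrix.diagonal (fun k => (σs k)⁻¹) with hΛi
  have hΛΛi : Λ * Λi = 1 := by
    rw [hΛ, hΛi, Matrix.diagonal_mul_diagonal]
    have h : (fun i => σs i * (σs i)⁻¹) = fun _ => (1:ℝ) :=
      funext fun k => mul_inv_cancel₀ (ne_of_gt (hσpos k))
    rw [h, Matrix.diagonal_one]
  -- U = Pm * B with B := Tmᵀ * Vstar * Λi
  have hRV : Pm * Tmᵀ * Vstar = Ustar * Λ := by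
    rw [hSVD, Matrix.mul_assoc, hVorth, Matrix.mul_one]
  have hU : Ustar = Pm * (Tmᵀ * Vstar * Λi) := by
    have := congrArg (fun M => M * Λi) hRV
    simpa [Matrix.mul_assoc, hΛΛi] using this.symm
  set B : Matrix (Fin K) (Fin K) ℝ := Tmᵀ * Vstar * Λi with hB
  -- U_S = B
  have hUS : Ustar.submatrix S id = B := by
    rw [hU, submatrix_mul_id', hS, Matrix.one_mul]
  have hU2 : Ustar = Pm * Ustar.submatrix S id := by rw [hUS]; exact hU
  -- invertibility
  have hBorth : Bᵀ * (Pmᵀ * (Pm * B)) = 1 := by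
    have : (Pm * B)ᵀ * (Pm * B) = 1 := by rw [← hU]; exact hUorth
    rw [Matrix.transpose_mul] at this
    rw [← Matrix.mul_assoc]
    rw [Matrix.mul_assoc Bᵀ Pmᵀ (Pm * B)] at this ⊢
    exact this
  have hBunit : IsUnit B := by
    have hBt : IsUnit Bᵀ := IsUnit.of_mul_eq_one _ hBorth
    rw [Matrix.isUnit_iff_isUnit_det] at hBt ⊢
    rwa [Matrix.det_transpose] at hBt
  have hUSunit : IsUnit (Ustar.submatrix S id) := by rw [hUS]; exact hBunit
  have hdet : IsUnit (Ustar.submatrix S id).det :=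
    (Matrix.isUnit_iff_isUnit_det _).mp hUSunit
  refine ⟨hUSunit, hU2, ?_, ?_⟩
  · have h1 : Ustar.submatrix S id * (Ustar.submatrix S id)⁻¹ = 1 :=
      Matrix.mul_nonsing_inv _ hdet
    calc Pm = Pm * (Ustar.submatrix S id * (Ustar.submatrix S id)⁻¹) := by
              rw [h1, Matrix.mul_one]
      _ = (Pm * Ustar.submatrix S id) * (Ustar.submatrix S id)⁻¹ := by
              rw [Matrix.mul_assoc]
      _ = Ustar * (Ustar.submatrix S id)⁻¹ := by rw [← hU2]
  · -- Tm part
    have hTms : Tmᵀ = Ustar.submatrix S id * Λ * Vstarᵀ := by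
      have := congrArg (fun M => M.submatrix S id) hSVD
      simp only [submatrix_mul_id'] at this
      rw [hS, Matrix.one_mul] at this
      exact this
    have := congrArg Matrix.transpose hTms
    rw [Matrix.transpose_transpose] at this
    rw [this]
    simp [Matrix.transpose_mul, Matrix.diagonal_transpose, Matrix.mul_assoc, hΛ]
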